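/- Let x be a skew-adjoint endomorphism of (V, B). Let W := span_k{x^n e : n ≥ 0} ⊆ V, the k[x]-submodule of V generated by e, and let U := {v ∈ V : B(w, v) = 0 for all w ∈ W}. The following are equivalent: (a) x has no nonzero isotropic eigenvector lying in V_H; (b) the restriction of B to U is nondegenerate and dim U ≤ 1. -/

import Mathlib

/-- The `B`-orthogonal complement `U` of the `k[x]`-submodule `W = k[x]·e` of `V`. -/
noncomputable def Uperp {k V : Type*} [Field k] [AddCommGroup V] [Module k V]
    (B : LinearMap.BilinForm k V) (e : V) (x : Module.End k V) : Submodule k V :=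
  LinearMap.BilinForm.orthogonal B
    (Submodule.span k (Set.range fun m : ℕ => (x ^ m) e))

/-- Existence of an eigenvector inside a nonzero invariant subspace. -/
lemma exists_eigvec {k V : Type*} [Field k] [IsAlgClosed k] [AddCommGroup V] [Module k V]
    [FiniteDimensional k V] (x : Module.End k V) (S : Submodule k V)
    (hS : ∀ v ∈ S, x v ∈ S) (hne : S ≠ ⊥) :
    ∃ (c : k) (v : V), v ∈ S ∧ v ≠ 0 ∧ x v = c • v := by
  haveI : Nontrivial S := Submodule.nontrivial_iff_ne_bot.mpr hne
  set y : Module.End k S := x.restrict hS with hy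
  obtain ⟨c, hc⟩ := Module.End.exists_eigenvalue y
  obtain ⟨v, hv⟩ := hc.exists_hasEigenvector
  refine ⟨c, v.val, v.2, by simpa using hv.2, ?_⟩
  have := hv.apply_eq_smul
  have h2 := congrArg Subtype.val this
  simpa [hy, LinearMap.restrict_apply] using h2

theorem statement12 (k V : Type*) [Field k] [IsAlgClosed k] [CharZero k]
    [AddCommGroup V] [Module k V] [FiniteDimensional k V]
    (B : LinearMap.BilinForm k V)
    (hsymm : ∀ u v : V, B u v = B v u)
    (hnd : LinearMap.BilinForm.Nondegenerate B)
    (e : V) (he : B e e ≠ 0)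
    (x : Module.End k V)
    (hskew : ∀ u v : V, B (x u) v = - B u (x v)) :
    (¬ ∃ (c : k) (v : V),
        v ∈ LinearMap.ker (B e) ∧ v ≠ 0 ∧ B v v = 0 ∧ x v = c • v) ↔
      (LinearMap.BilinForm.Nondegenerate
          (B.domRestrict₁₂ (Uperp B e x) (Uperp B e x)) ∧
        Module.finrank k ↥(Uperp B e x) ≤ 1) := by
  set U := Uperp B e x with hU
  -- membership criterion for U
  have hmem : ∀ v : V, v ∈ U ↔ ∀ m : ℕ, B ((x ^ m) e) v = 0 := by
    intro v
    constructor
    · intro hv m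
      exact (LinearMap.BilinForm.mem_orthogonal_iff.mp hv) _
        (Submodule.subset_span ⟨m, rfl⟩)
    · intro h
      rw [hU, Uperp, LinearMap.BilinForm.mem_orthogonal_iff]
      intro n hn
      induction hn using Submodule.span_induction with
      | mem w hw => obtain ⟨m, rfl⟩ := hw; exact h m
      | zero => simp [LinearMap.BilinForm.IsOrtho]
      | add a b _ _ ha hb =>
          simp only [LinearMap.BilinForm.IsOrtho, map_add, LinearMap.add_apply] at *
          rw [ha, hb, add_zero]
      | smul c a _ ha =>
          simp only [LinearMap.BilinForm.IsOrtho, map_smul, LinearMap.smul_apply] at *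
          rw [ha, smul_zero]
  -- U is contained in ker (B e)
  have hUe : ∀ v ∈ U, B e v = 0 := by
    intro v hv
    have := (hmem v).mp hv 0
    simpa using this
  -- U is x-invariant
  have hUinv : ∀ v ∈ U, x v ∈ U := by
    intro v hv
    rw [hmem]
    intro m
    have h1 : B ((x ^ (m + 1)) e) v = 0 := (hmem v).mp hv (m + 1)
    have h2 : (x ^ (m + 1)) e = x ((x ^ m) e) := by
      rw [pow_succ']; rfl
    have := hskew ((x ^ m) e) v
    rw [← h2, h1] at this
    exact neg_eq_zero.mp this.symm
  constructor
  · -- (a) → (b)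
    intro H
    have hndU : LinearMap.BilinForm.Nondegenerate
        (B.domRestrict₁₂ U U) := by
      refine LinearMap.BilinForm.Nondegenerate.ofSeparatingLeft ?_
      intro u hu
      by_contra hu0
      -- the radical R = U ⊓ U^⊥ is nonzero, x-invariant
      set R := U ⊓ LinearMap.BilinForm.orthogonal B U with hR
      have hRinv : ∀ v ∈ R, x v ∈ R := by
        intro v hv
        rw [hR, Submodule.mem_inf] at hv
        obtain ⟨hv1, hv2⟩ := hv
        rw [hR, Submodule.mem_inf]
        refine ⟨hUinv v hv1, ?_⟩
        rw [LinearMap.BilinForm.mem_orthogonal_iff]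
        intro n hn
        have := hskew n v
        have h1 : B (x n) v = 0 :=
          (LinearMap.BilinForm.mem_orthogonal_iff.mp hv2) _ (hUinv n hn)
        rw [this] at h1
        exact neg_eq_zero.mp h1
      have hune : (u : V) ≠ 0 := fun h => hu0 (Subtype.ext h)
      have hRne : R ≠ ⊥ := by
        intro h
        apply hune
        have huR : (u : V) ∈ R := by
          rw [hR, Submodule.mem_inf]
          refine ⟨u.2, ?_⟩
          rw [LinearMap.BilinForm.mem_orthogonal_iff]
          intro n hn
          have := hu ⟨n, hn⟩
          simpa [LinearMap.BilinForm.IsOrtho, LinearMap.domRestrict₁₂_apply, hsymm n u] using this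
        rw [h] at huR
        simpa using huR
      obtain ⟨c, v, hvR, hv0, hveq⟩ := exists_eigvec x R hRinv hRne
      obtain ⟨hvU, hvO⟩ := hvR
      refine H ⟨c, v, ?_, hv0, ?_, hveq⟩
      · exact LinearMap.mem_ker.mpr (hUe v hvU)
      · exact (LinearMap.BilinForm.mem_orthogonal_iff.mp hvO) _ hvU
    refine ⟨hndU, ?_⟩
    -- now show finrank U ≤ 1
    by_contra hrk
    push_neg at hrk
    have hUne : U ≠ ⊥ := by
      intro h
      rw [h] at hrk
      simp at hrk
    -- first eigenvector in U
    obtain ⟨c, v, hvU, hv0, hveq⟩ := exists_eigvec x U hUinv hUne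
    have hvv : B v v ≠ 0 := by
      intro h
      exact H ⟨c, v, LinearMap.mem_ker.mpr (hUe v hvU), hv0, h, hveq⟩
    have hc0 : c = 0 := by
      have h1 := hskew v v
      rw [hveq] at h1
      simp only [map_smul, LinearMap.smul_apply, smul_eq_mul] at h1
      have : (2 : k) * (c * B v v) = 0 := by linear_combination h1
      rcases mul_eq_zero.mp this with h | h
      · exact absurd h two_ne_zero
      · exact (mul_eq_zero.mp h).resolve_right hvv
    have hxv : x v = 0 := by rw [hveq, hc0, zero_smul]
    -- second eigenvector in U ⊓ ker (B v)
    set U' := U ⊓ LinearMap.ker (B v) with hU'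
    have hU'inv : ∀ w ∈ U', x w ∈ U' := by
      intro w hw
      rw [hU', Submodule.mem_inf] at hw
      obtain ⟨hw1, hw2⟩ := hw
      rw [hU', Submodule.mem_inf]
      refine ⟨hUinv w hw1, LinearMap.mem_ker.mpr ?_⟩
      have := hskew v w
      rw [hxv] at this
      simp only [map_zero, LinearMap.zero_apply] at this
      exact neg_eq_zero.mp this.symm
    have hU'ne : U' ≠ ⊥ := by
      intro h
      set g : U →ₗ[k] k := (B v).comp U.subtype with hg
      have hginj : Function.Injective g := by
        rw [← LinearMap.ker_eq_bot]
        rw [Submodule.eq_bot_iff]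
        rintro u hu
        have h1 : (u : V) ∈ U' := by
          rw [hU', Submodule.mem_inf]
          exact ⟨u.2, LinearMap.mem_ker.mpr hu⟩
        rw [h] at h1
        simpa using h1
      have := LinearMap.finrank_le_finrank_of_injective hginj
      rw [Module.finrank_self] at this
      omega
    obtain ⟨c2, v2, hv2U', hv20, hv2eq⟩ := exists_eigvec x U' hU'inv hU'ne
    rw [hU', Submodule.mem_inf] at hv2U'
    obtain ⟨hv2U, hv2ker⟩ := hv2U'
    have hv2v2 : B v2 v2 ≠ 0 := by
      intro h
      exact H ⟨c2, v2, LinearMap.mem_ker.mpr (hUe v2 hv2U), hv20, h, hv2eq⟩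
    have hc20 : c2 = 0 := by
      have h1 := hskew v2 v2
      rw [hv2eq] at h1
      simp only [map_smul, LinearMap.smul_apply, smul_eq_mul] at h1
      have : (2 : k) * (c2 * B v2 v2) = 0 := by linear_combination h1
      rcases mul_eq_zero.mp this with h | h
      · exact absurd h two_ne_zero
      · exact (mul_eq_zero.mp h).resolve_right hv2v2
    have hxv2 : x v2 = 0 := by rw [hv2eq, hc20, zero_smul]
    have hvv2 : B v v2 = 0 := LinearMap.mem_ker.mp hv2ker
    -- build the isotropic eigenvector w = v + t • v2
    obtain ⟨t, ht⟩ := IsAlgClosed.exists_pow_nat_eq (k := k) (-(B v v) / B v2 v2) two_pos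
    have ht0 : t ≠ 0 := by
      intro h
      rw [h] at ht
      have : -(B v v) / B v2 v2 = 0 := by rw [← ht]; ring
      rw [div_eq_zero_iff] at this
      rcases this with h1 | h1
      · exact hvv (neg_eq_zero.mp h1)
      · exact hv2v2 h1
    set w := v + t • v2 with hw
    have hww : B w w = 0 := by
      have hexp : B w w = B v v + t * B v v2 + t * B v2 v + t ^ 2 * B v2 v2 := by
        simp only [hw, map_add, map_smul, LinearMap.add_apply, LinearMap.smul_apply,
          smul_eq_mul]
        ring
      rw [hexp, hvv2, hsymm v2 v, hvv2, ht]
      field_simp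
      ring
    have hw0 : w ≠ 0 := by
      intro h
      have h1 : B v2 w = 0 := by rw [h]; simp
      rw [hw] at h1
      simp only [map_add, map_smul, LinearMap.add_apply, LinearMap.smul_apply,
        smul_eq_mul] at h1
      rw [hsymm v2 v, hvv2] at h1
      simp only [zero_add] at h1
      exact hv2v2 ((mul_eq_zero.mp h1).resolve_left ht0)
    have hxw : x w = (0 : k) • w := by
      rw [hw]
      simp [hxv, hxv2]
    have hwU : w ∈ U := U.add_mem hvU (U.smul_mem t hv2U)
    exact H ⟨0, w, LinearMap.mem_ker.mpr (hUe w hwU), hw0, hww, hxw⟩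
  · -- (b) → (a)
    rintro ⟨hndU, hrk⟩ ⟨c, v, hvker, hv0, hvv, hveq⟩
    -- show v ∈ U
    have hvO : ∀ m : ℕ, B ((x ^ m) e) v = (-c) ^ m * B e v := by
      intro m
      induction m with
      | zero => simp
      | succ n ih =>
        have h2 : (x ^ (n + 1)) e = x ((x ^ n) e) := by rw [pow_succ']; rfl
        rw [h2, hskew, hveq]
        simp only [map_smul, smul_eq_mul]
        rw [ih]
        ring
    have hvU : v ∈ U := by
      rw [hmem]
      intro m
      rw [hvO m, LinearMap.mem_ker.mp hvker, mul_zero]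
    -- U is at most 1-dimensional, spanned by some u₀
    obtain ⟨u₀, hu₀⟩ := finrank_le_one_iff.mp hrk
    obtain ⟨a, ha⟩ := hu₀ ⟨v, hvU⟩
    have ha0 : a ≠ 0 := by
      intro h
      rw [h, zero_smul] at ha
      exact hv0 (by simpa using congrArg Subtype.val ha.symm)
    have hu₀0 : B (u₀ : V) (u₀ : V) = 0 := by
      have : B v v = a ^ 2 * B (u₀ : V) (u₀ : V) := by
        have hval : v = a • (u₀ : V) := by
          have := congrArg Subtype.val ha
          simpa using this.symm
        rw [hval]
        simp only [map_smul, LinearMap.smul_apply, smul_eq_mul]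
        ring
      rw [hvv] at this
      have := this.symm
      rcases mul_eq_zero.mp this with h | h
      · exact absurd (pow_eq_zero_iff two_ne_zero |>.mp h) ha0
      · exact h
    -- v kills all of U, contradiction with nondegeneracy
    have : (⟨v, hvU⟩ : U) = 0 := by
      apply hndU.1
      intro u'
      obtain ⟨b, hb⟩ := hu₀ u'
      have hval : (u' : V) = b • (u₀ : V) := by
        have := congrArg Subtype.val hb
        simpa using this.symm
      have hvval : v = a • (u₀ : V) := by
        have := congrArg Subtype.val ha
        simpa using this.symm
      simp only [LinearMap.domRestrict₁₂_apply]
      rw [hval, hvval]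
      simp only [map_smul, LinearMap.smul_apply, smul_eq_mul]
      rw [hu₀0]
      ring
    exact hv0 (by simpa using congrArg Subtype.val this)
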